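/- Theorem 1 (monotonic nonincrease of the full update sweep): with all entries of z, t, v strictly positive, c entrywise nonnegative, p entrywise nonnegative, μ ≥ 0, and ∑_{i,j} t(i,k)·v(j,k) + μ > 0 for every k, perform one full sweep: (i) choose b'(k) ∈ argmin_{b} ∑_{a} D(p(b,a) | z(a,k)) for every k; (ii) set z'(a,k) = ( z(a,k)·∑_{i,j} c(a,i,j)·t(i,k)·v(j,k)/m(a,i,j) + μ·p(b'(k),a) ) / ( ∑_{i,j} t(i,k)·v(j,k) + μ ); (iii) set t'(i,k) = t(i,k)·( ∑_{a,j} c(a,i,j)·z'(a,k)·v(j,k)/m'(a,i,j) ) / ( ∑_{a,j} z'(a,k)·v(j,k) ) where m'(a,i,j) = ∑_{k} z'(a,k)·t(i,k)·v(j,k); (iv) set v'(j,k) = v(j,k)·( ∑_{a,i} c(a,i,j)·z'(a,k)·t'(i,k)/m''(a,i,j) ) / ( ∑_{a,i} z'(a,k)·t'(i,k) ) where m''(a,i,j) = ∑_{k} z'(a,k)·t'(i,k)·v(j,k). If all entries of z', t', v' remain strictly positive, then J(z',t',v',b') ≤ J(z,t,v,b) for every initial assignment b : Fin K → Fin B.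 -/

import Mathlib

open Finset Real

/-- Generalized Kullback–Leibler divergence `D(b|a) = b·log(b/a) + a − b`
(with the convention `0·log 0 = 0`, automatic since `Real.log 0 = 0`). -/
noncomputable def klD (q a : ℝ) : ℝ := q * Real.log (q / a) + a - q

/-- NTF model `m(a,i,j) = ∑ k, z(a,k)·t(i,k)·v(j,k)`. -/
noncomputable def ntfModel {A I J K : ℕ}
    (z : Fin A → Fin K → ℝ) (t : Fin I → Fin K → ℝ) (v : Fin J → Fin K → ℝ)
    (a : Fin A) (i : Fin I) (j : Fin J) : ℝ :=
  ∑ k, z a k * t i k * v j k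

/-- Regularized cost
`J(z,t,v,b) = ∑_{a,i,j} D(c(a,i,j)|m(a,i,j)) + μ·∑_k ∑_a D(p(b(k),a)|z(a,k))`. -/
noncomputable def ntfCost {A I J K B : ℕ}
    (c : Fin A → Fin I → Fin J → ℝ) (μ : ℝ) (p : Fin B → Fin A → ℝ)
    (z : Fin A → Fin K → ℝ) (t : Fin I → Fin K → ℝ) (v : Fin J → Fin K → ℝ)
    (b : Fin K → Fin B) : ℝ :=
  (∑ a, ∑ i, ∑ j, klD (c a i j) (ntfModel z t v a i j)) +
    μ * ∑ k, ∑ a, klD (p (b k) a) (z a k)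

lemma mul_log_div (c m : ℝ) (hm : m ≠ 0) :
    c * Real.log (c / m) = c * Real.log c - c * Real.log m := by
  rcases eq_or_ne c 0 with rfl | hc
  · simp
  · rw [Real.log_div hc hm]; ring

lemma scalar_min {A B x : ℝ} (hA : 0 < A) (hB : 0 ≤ B) (hx : 0 < x) :
    A * (B / A) - B * Real.log (B / A) ≤ A * x - B * Real.log x := by
  rcases eq_or_lt_of_le hB with h0 | hB
  · simp [← h0]; positivity
  · have h := Real.log_le_sub_one_of_pos (show 0 < A * x / B by positivity)
    have e1 : Real.log (A * x / B) = Real.log x - Real.log (B / A) := by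
      rw [Real.log_div (by positivity) hB.ne', Real.log_div hB.ne' hA.ne',
        Real.log_mul hA.ne' hx.ne']; ring
    have e2 : A * (B / A) = B := by field_simp
    have h3 := mul_le_mul_of_nonneg_left h hB.le
    have e4 : B * (A * x / B - 1) = A * x - B := by field_simp
    rw [e1] at h3; rw [e2]; nlinarith

lemma sum_mul_log_le {K : ℕ} (lam pfn : Fin K → ℝ) (hl : ∀ k, 0 ≤ lam k)
    (hs : ∑ k, lam k = 1) (hp : ∀ k, 0 < pfn k) :
    ∑ k, lam k * Real.log (pfn k) ≤ Real.log (∑ k, lam k * pfn k) := by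
  have := strictConcaveOn_log_Ioi.concaveOn.le_map_sum (t := Finset.univ)
    (w := lam) (p := pfn) (fun k _ => hl k) hs (fun k _ => hp k)
  simpa using this

/-- One multiplicative update step of a single row of one factor, with optional
KL regularization, does not increase the (regularized) KL cost of that row. -/
lemma row_step {E : Type*} [Fintype E] {K : ℕ} (hK : 0 < K)
    (c : E → ℝ) (hc : ∀ e, 0 ≤ c e)
    (w : E → Fin K → ℝ) (hw : ∀ e k, 0 < w e k)
    (μ : ℝ) (hμ : 0 ≤ μ) (q : Fin K → ℝ) (hq : ∀ k, 0 ≤ q k)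
    (x x' : Fin K → ℝ) (hx : ∀ k, 0 < x k) (hx' : ∀ k, 0 < x' k)
    (hden : ∀ k, 0 < (∑ e, w e k) + μ)
    (hx'def : ∀ k, x' k =
      (x k * ∑ e, c e * w e k / (∑ k', x k' * w e k') + μ * q k) / ((∑ e, w e k) + μ)) :
    (∑ e, klD (c e) (∑ k, x' k * w e k)) + μ * ∑ k, klD (q k) (x' k) ≤
    (∑ e, klD (c e) (∑ k, x k * w e k)) + μ * ∑ k, klD (q k) (x k) := by
  have hKne : (Finset.univ : Finset (Fin K)).Nonempty := ⟨⟨0, hK⟩, Finset.mem_univ _⟩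
  set m : E → ℝ := fun e => ∑ k', x k' * w e k' with hm_def
  have hm : ∀ e, 0 < m e := fun e =>
    Finset.sum_pos (fun k _ => mul_pos (hx k) (hw e k)) hKne
  set lam : E → Fin K → ℝ := fun e k => x k * w e k / m e with hlam_def
  have hlam_pos : ∀ e k, 0 < lam e k := fun e k =>
    div_pos (mul_pos (hx k) (hw e k)) (hm e)
  have hlam_sum : ∀ e, ∑ k, lam e k = 1 := fun e => by
    rw [← Finset.sum_div]; exact div_self (hm e).ne'
  set Afn : Fin K → ℝ := fun k => (∑ e, w e k) + μ with hA_def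
  set Bfn : Fin K → ℝ := fun k => x k * (∑ e, c e * w e k / m e) + μ * q k with hB_def
  have hApos : ∀ k, 0 < Afn k := hden
  have hBnn : ∀ k, 0 ≤ Bfn k := by
    intro k
    have : 0 ≤ ∑ e, c e * w e k / m e :=
      Finset.sum_nonneg fun e _ => div_nonneg (mul_nonneg (hc e) (hw e k).le) (hm e).le
    have := mul_nonneg (hx k).le this
    have := mul_nonneg hμ (hq k)
    simp only [hB_def]; positivity
  have hx'B : ∀ k, x' k = Bfn k / Afn k := fun k => hx'def k
  -- The auxiliary (majorizing) function, in separable form plus a constant.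
  set C0 : ℝ := (∑ e, (c e * Real.log (c e) - c e
      - c e * ∑ k, lam e k * Real.log (w e k / lam e k)))
    + μ * ∑ k, (q k * Real.log (q k) - q k) with hC0
  -- Key identity: the auxiliary function expands entrywise.
  have expand : ∀ y : Fin K → ℝ, (∀ k, 0 < y k) →
      C0 + ∑ k, (Afn k * y k - Bfn k * Real.log (y k)) =
      (∑ e, (c e * Real.log (c e)
          - c e * ∑ k, lam e k * Real.log (w e k * y k / lam e k)
          + (∑ k, y k * w e k) - c e))
        + μ * ∑ k, klD (q k) (y k) := by
    intro y hy
    have hlog : ∀ e k, Real.log (w e k * y k / lam e k)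
        = Real.log (w e k / lam e k) + Real.log (y k) := by
      intro e k
      rw [mul_div_right_comm, Real.log_mul (div_pos (hw e k) (hlam_pos e k)).ne' (hy k).ne']
    have hkl : ∀ k, klD (q k) (y k)
        = q k * Real.log (q k) - q k * Real.log (y k) + y k - q k := by
      intro k
      unfold klD
      rw [mul_log_div _ _ (hy k).ne']
    have h1 : ∑ k, Afn k * y k = (∑ e, ∑ k, y k * w e k) + μ * ∑ k, y k := by
      calc ∑ k, Afn k * y k = ∑ k, ((∑ e, w e k * y k) + μ * y k) := by
            refine Finset.sum_congr rfl fun k _ => ?_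
            simp only [hA_def]
            rw [add_mul, Finset.sum_mul]
        _ = (∑ k, ∑ e, w e k * y k) + μ * ∑ k, y k := by
            rw [Finset.sum_add_distrib, Finset.mul_sum]
        _ = (∑ e, ∑ k, y k * w e k) + μ * ∑ k, y k := by
            rw [Finset.sum_comm]
            simp only [mul_comm]
    have h2 : ∑ k, Bfn k * Real.log (y k)
        = (∑ e, c e * ∑ k, lam e k * Real.log (y k)) + μ * ∑ k, q k * Real.log (y k) := by
      calc ∑ k, Bfn k * Real.log (y k)
          = ∑ k, ((∑ e, c e * (lam e k * Real.log (y k))) + μ * (q k * Real.log (y k))) := by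
            refine Finset.sum_congr rfl fun k _ => ?_
            simp only [hB_def]
            rw [add_mul, mul_assoc, mul_assoc]
            congr 1
            rw [Finset.sum_mul, Finset.mul_sum]
            refine Finset.sum_congr rfl fun e _ => ?_
            simp only [hlam_def]
            ring
        _ = (∑ k, ∑ e, c e * (lam e k * Real.log (y k))) + μ * ∑ k, q k * Real.log (y k) := by
            rw [Finset.sum_add_distrib, Finset.mul_sum]
        _ = (∑ e, c e * ∑ k, lam e k * Real.log (y k)) + μ * ∑ k, q k * Real.log (y k) := by
            rw [Finset.sum_comm]
            simp only [Finset.mul_sum]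
    have h3 : ∀ e, ∑ k, lam e k * Real.log (w e k * y k / lam e k)
        = (∑ k, lam e k * Real.log (w e k / lam e k)) + ∑ k, lam e k * Real.log (y k) := by
      intro e
      simp only [hlog, mul_add, Finset.sum_add_distrib]
    have h4 : ∑ k, klD (q k) (y k)
        = (∑ k, (q k * Real.log (q k) - q k)) - (∑ k, q k * Real.log (y k)) + ∑ k, y k := by
      simp only [hkl, Finset.sum_add_distrib, Finset.sum_sub_distrib]
      ring
    rw [Finset.sum_sub_distrib, h1, h2, h4, hC0]
    simp only [h3, mul_add, mul_sub, Finset.sum_add_distrib, Finset.sum_sub_distrib]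
    ring
  -- Per-entry Jensen upper bound.
  have entry_le : ∀ y : Fin K → ℝ, (∀ k, 0 < y k) → ∀ e,
      klD (c e) (∑ k, y k * w e k) ≤
      c e * Real.log (c e) - c e * ∑ k, lam e k * Real.log (w e k * y k / lam e k)
        + (∑ k, y k * w e k) - c e := by
    intro y hy e
    have hMy : 0 < ∑ k, y k * w e k :=
      Finset.sum_pos (fun k _ => mul_pos (hy k) (hw e k)) hKne
    unfold klD
    rw [mul_log_div _ _ hMy.ne']
    have jensen : ∑ k, lam e k * Real.log (w e k * y k / lam e k)
        ≤ Real.log (∑ k, y k * w e k) := by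
      have h := sum_mul_log_le (lam e) (fun k => w e k * y k / lam e k)
        (fun k => (hlam_pos e k).le) (hlam_sum e)
        (fun k => div_pos (mul_pos (hw e k) (hy k)) (hlam_pos e k))
      have heq : ∑ k, lam e k * (w e k * y k / lam e k) = ∑ k, y k * w e k :=
        Finset.sum_congr rfl fun k _ => by
          field_simp [(hlam_pos e k).ne']
      rwa [heq] at h
    have := mul_le_mul_of_nonneg_left jensen (hc e)
    linarith
  -- Per-entry equality at the current point `x`.
  have entry_eq : ∀ e, klD (c e) (∑ k, x k * w e k) =
      c e * Real.log (c e) - c e * ∑ k, lam e k * Real.log (w e k * x k / lam e k)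
        + (∑ k, x k * w e k) - c e := by
    intro e
    have hme : (∑ k, x k * w e k) = m e := rfl
    have hlogm : ∀ k : Fin K, Real.log (w e k * x k / lam e k) = Real.log (m e) := by
      intro k
      congr 1
      rw [div_eq_iff (hlam_pos e k).ne']
      simp only [hlam_def]
      rw [mul_comm (m e), div_mul_cancel₀ _ (hm e).ne', mul_comm]
    have hsum : ∑ k, lam e k * Real.log (w e k * x k / lam e k) = Real.log (m e) := by
      simp only [hlogm]
      rw [← Finset.sum_mul, hlam_sum e, one_mul]
    rw [hsum, hme]
    unfold klD
    rw [mul_log_div _ _ (hm e).ne']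
  calc (∑ e, klD (c e) (∑ k, x' k * w e k)) + μ * ∑ k, klD (q k) (x' k)
      ≤ (∑ e, (c e * Real.log (c e)
          - c e * ∑ k, lam e k * Real.log (w e k * x' k / lam e k)
          + (∑ k, x' k * w e k) - c e)) + μ * ∑ k, klD (q k) (x' k) :=
        add_le_add_left (Finset.sum_le_sum fun e _ => entry_le x' hx' e) _
    _ = C0 + ∑ k, (Afn k * x' k - Bfn k * Real.log (x' k)) := (expand x' hx').symm
    _ ≤ C0 + ∑ k, (Afn k * x k - Bfn k * Real.log (x k)) := by
        refine add_le_add_right (Finset.sum_le_sum fun k _ => ?_) _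
        rw [hx'B k]
        exact scalar_min (hApos k) (hBnn k) (hx k)
    _ = (∑ e, (c e * Real.log (c e)
          - c e * ∑ k, lam e k * Real.log (w e k * x k / lam e k)
          + (∑ k, x k * w e k) - c e)) + μ * ∑ k, klD (q k) (x k) := expand x hx
    _ = (∑ e, klD (c e) (∑ k, x k * w e k)) + μ * ∑ k, klD (q k) (x k) := by
        rw [Finset.sum_congr rfl fun e _ => (entry_eq e).symm]


/-- Theorem 1: one full sweep of the label, allocation, basis, and activation
updates does not increase the regularized cost. -/
theorem stmt5 (A I J K B : ℕ)
    (z : Fin A → Fin K → ℝ) (t : Fin I → Fin K → ℝ) (v : Fin J → Fin K → ℝ)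
    (hz : ∀ a k, 0 < z a k) (ht : ∀ i k, 0 < t i k) (hv : ∀ j k, 0 < v j k)
    (c : Fin A → Fin I → Fin J → ℝ) (hc : ∀ a i j, 0 ≤ c a i j)
    (p : Fin B → Fin A → ℝ) (hp : ∀ b a, 0 ≤ p b a)
    (μ : ℝ) (hμ : 0 ≤ μ)
    (hden : ∀ k : Fin K, 0 < (∑ i, ∑ j, t i k * v j k) + μ)
    -- (i) label update: each b'(k) is a nearest attractor to z(·,k)
    (b' : Fin K → Fin B)
    (hb' : ∀ k, ∀ b : Fin B,
      ∑ a, klD (p (b' k) a) (z a k) ≤ ∑ a, klD (p b a) (z a k))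
    -- (ii) allocation update
    (z' : Fin A → Fin K → ℝ)
    (hz'def : ∀ a k, z' a k =
      (z a k * ∑ i, ∑ j, c a i j * t i k * v j k / ntfModel z t v a i j
        + μ * p (b' k) a) / ((∑ i, ∑ j, t i k * v j k) + μ))
    -- (iii) basis update, using m'(a,i,j) = ∑ k, z'(a,k)·t(i,k)·v(j,k)
    (t' : Fin I → Fin K → ℝ)
    (ht'def : ∀ i k, t' i k =
      t i k * (∑ a, ∑ j, c a i j * z' a k * v j k / ntfModel z' t v a i j) /
        (∑ a, ∑ j, z' a k * v j k))
    -- (iv) activation update, using m''(a,i,j) = ∑ k, z'(a,k)·t'(i,k)·v(j,k)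
    (v' : Fin J → Fin K → ℝ)
    (hv'def : ∀ j k, v' j k =
      v j k * (∑ a, ∑ i, c a i j * z' a k * t' i k / ntfModel z' t' v a i j) /
        (∑ a, ∑ i, z' a k * t' i k))
    (hz' : ∀ a k, 0 < z' a k) (ht' : ∀ i k, 0 < t' i k) (hv' : ∀ j k, 0 < v' j k) :
    ∀ b : Fin K → Fin B,
      ntfCost c μ p z' t' v' b' ≤ ntfCost c μ p z t v b := by
  intro b
  -- (i) label update does not increase the cost
  have step1 : ntfCost c μ p z t v b' ≤ ntfCost c μ p z t v b := by
    unfold ntfCost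
    exact add_le_add_right
      (mul_le_mul_of_nonneg_left (Finset.sum_le_sum fun k _ => hb' k (b k)) hμ) _
  rcases Nat.eq_zero_or_pos K with hK0 | hK
  · subst hK0
    have e1 : ntfCost c μ p z' t' v' b' = ntfCost c μ p z t v b' := by
      simp [ntfCost, ntfModel]
    rw [e1]; exact step1
  rcases Nat.eq_zero_or_pos A with hA0 | hA
  · subst hA0
    simp [ntfCost]
  -- (ii) allocation update
  have step2 : ntfCost c μ p z' t v b' ≤ ntfCost c μ p z t v b' := by
    have rearr : ∀ (zz : Fin A → Fin K → ℝ), ntfCost c μ p zz t v b' =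
        ∑ a, ((∑ e : Fin I × Fin J,
            klD (c a e.1 e.2) (∑ k, zz a k * (t e.1 k * v e.2 k)))
          + μ * ∑ k, klD (p (b' k) a) (zz a k)) := by
      intro zz
      unfold ntfCost ntfModel
      rw [Finset.sum_add_distrib]
      congr 1
      · exact Finset.sum_congr rfl fun a _ => by
          simp [Fintype.sum_prod_type, mul_assoc]
      · rw [Finset.sum_comm, Finset.mul_sum]
    rw [rearr z', rearr z]
    refine Finset.sum_le_sum fun a _ => ?_
    refine row_step (E := Fin I × Fin J) hK (fun e => c a e.1 e.2) (fun e => hc a e.1 e.2)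
      (fun e k => t e.1 k * v e.2 k) (fun e k => mul_pos (ht e.1 k) (hv e.2 k))
      μ hμ (fun k => p (b' k) a) (fun k => hp (b' k) a)
      (z a) (z' a) (fun k => hz a k) (fun k => hz' a k)
      (fun k => by simpa [Fintype.sum_prod_type] using hden k)
      (fun k => by
        rw [hz'def a k]
        simp [Fintype.sum_prod_type, ntfModel, mul_assoc])
  -- (iii) basis update
  have step3 : ntfCost c μ p z' t' v b' ≤ ntfCost c μ p z' t v b' := by
    rcases Nat.eq_zero_or_pos J with hJ0 | hJ
    · subst hJ0
      apply le_of_eq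
      simp [ntfCost]
    haveI : Nonempty (Fin A) := ⟨⟨0, hA⟩⟩
    haveI : Nonempty (Fin J) := ⟨⟨0, hJ⟩⟩
    have rearr : ∀ (tt : Fin I → Fin K → ℝ),
        (∑ a, ∑ i, ∑ j, klD (c a i j) (ntfModel z' tt v a i j)) =
        ∑ i, ∑ e : Fin A × Fin J,
          klD (c e.1 i e.2) (∑ k, tt i k * (z' e.1 k * v e.2 k)) := by
      intro tt
      rw [Finset.sum_comm]
      refine Finset.sum_congr rfl fun i _ => ?_
      simp only [Fintype.sum_prod_type, ntfModel]
      refine Finset.sum_congr rfl fun a _ => Finset.sum_congr rfl fun j _ => ?_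
      congr 1
      exact Finset.sum_congr rfl fun k _ => by ring
    unfold ntfCost
    refine add_le_add_left ?_ _
    rw [rearr t', rearr t]
    refine Finset.sum_le_sum fun i _ => ?_
    have h := row_step (E := Fin A × Fin J) hK (fun e => c e.1 i e.2)
      (fun e => hc e.1 i e.2)
      (fun e k => z' e.1 k * v e.2 k) (fun e k => mul_pos (hz' e.1 k) (hv e.2 k))
      0 le_rfl (fun _ => 0) (fun _ => le_rfl)
      (t i) (t' i) (fun k => ht i k) (fun k => ht' i k)
      (fun k => by
        simpa using Finset.sum_pos
          (fun e _ => mul_pos (hz' e.1 k) (hv e.2 k)) Finset.univ_nonempty)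
      (fun k => by
        rw [ht'def i k]
        simp [Fintype.sum_prod_type, ntfModel, mul_comm, mul_left_comm, mul_assoc])
    simpa using h
  -- (iv) activation update
  have step4 : ntfCost c μ p z' t' v' b' ≤ ntfCost c μ p z' t' v b' := by
    rcases Nat.eq_zero_or_pos I with hI0 | hI
    · subst hI0
      apply le_of_eq
      simp [ntfCost]
    haveI : Nonempty (Fin A) := ⟨⟨0, hA⟩⟩
    haveI : Nonempty (Fin I) := ⟨⟨0, hI⟩⟩
    have rearr : ∀ (vv : Fin J → Fin K → ℝ),
        (∑ a, ∑ i, ∑ j, klD (c a i j) (ntfModel z' t' vv a i j)) =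
        ∑ j, ∑ e : Fin A × Fin I,
          klD (c e.1 e.2 j) (∑ k, vv j k * (z' e.1 k * t' e.2 k)) := by
      intro vv
      rw [show (∑ a, ∑ i, ∑ j, klD (c a i j) (ntfModel z' t' vv a i j))
          = ∑ a, ∑ j, ∑ i, klD (c a i j) (ntfModel z' t' vv a i j) from
        Finset.sum_congr rfl fun a _ => Finset.sum_comm, Finset.sum_comm]
      refine Finset.sum_congr rfl fun j _ => ?_
      simp only [Fintype.sum_prod_type, ntfModel]
      refine Finset.sum_congr rfl fun a _ => Finset.sum_congr rfl fun i _ => ?_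
      congr 1
      exact Finset.sum_congr rfl fun k _ => by ring
    unfold ntfCost
    refine add_le_add_left ?_ _
    rw [rearr v', rearr v]
    refine Finset.sum_le_sum fun j _ => ?_
    have h := row_step (E := Fin A × Fin I) hK (fun e => c e.1 e.2 j)
      (fun e => hc e.1 e.2 j)
      (fun e k => z' e.1 k * t' e.2 k) (fun e k => mul_pos (hz' e.1 k) (ht' e.2 k))
      0 le_rfl (fun _ => 0) (fun _ => le_rfl)
      (v j) (v' j) (fun k => hv j k) (fun k => hv' j k)
      (fun k => by
        simpa using Finset.sum_pos
          (fun e _ => mul_pos (hz' e.1 k) (ht' e.2 k)) Finset.univ_nonempty)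
      (fun k => by
        rw [hv'def j k]
        simp [Fintype.sum_prod_type, ntfModel, mul_comm, mul_left_comm, mul_assoc])
    simpa using h
  linarith
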